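/- Suppose BWT[0..n−1] = (bc)^{n/10} · a^{4n/5} for n divisible by 10, over alphabet {a,b,c} with a < b < c. Then the BWT has exactly n/5 + 1 runs, and for every position i in the run of a's with offset d = i − n/5 > n/5, computing LF(i) by sequential scan from the table row of LF(n/5) requires scanning across all n/5 runs of b's and c's, i.e., at least 3n/5 of the n positions require scanning r − 1 = n/5 rows; hence the average scan length over all positions is Ω(r). -/
import Mathlib


def finPred {n : ℕ} (i : Fin n) : Fin n :=
  ⟨i.val - 1, Nat.lt_of_le_of_lt (Nat.sub_le _ _) i.isLt⟩

/-- C(c) = number of positions j with BWT[j] < c. -/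
def Ccount {n : ℕ} {α : Type*} [LinearOrder α] (B : Fin n → α) (c : α) : ℕ :=
  (Finset.univ.filter (fun j => B j < c)).card

/-- rank_c(B, i) = number of positions j < i with B[j] = c. -/
def rank {n : ℕ} {α : Type*} [LinearOrder α] (B : Fin n → α) (c : α) (i : Fin n) : ℕ :=
  (Finset.univ.filter (fun j => j < i ∧ B j = c)).card

/-- LF(i) = C(BWT[i]) + rank_{BWT[i]}(BWT, i). -/
def LF {n : ℕ} {α : Type*} [LinearOrder α] (B : Fin n → α) (i : Fin n) : ℕ :=
  Ccount B (B i) + rank B (B i) i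

/-- Run heads: positions i with i = 0 or B[i] ≠ B[i−1]. -/
def runHeads {n : ℕ} {α : Type*} [LinearOrder α] (B : Fin n → α) : Finset (Fin n) :=
  Finset.univ.filter (fun i => i.val = 0 ∨ B i ≠ B (finPred i))

/-- For BWT = (bc)^{n/10} · a^{4n/5} (10 ∣ n): the BWT has exactly r = n/5 + 1 runs,
LF(n/5 + t) = t for 0 ≤ t < 4n/5 (so the destinations of the run of a's interleave all
the unit runs of b's and c's), and the number of run heads with position ≤ t is
min(t, n/5) + 1 — in particular it equals r = n/5 + 1 as soon as t ≥ n/5, so a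
sequential scan for an LF step with destination t ≥ n/5 crosses all r − 1 = n/5 unit
runs of b's and c's; since 3n/5 of the n positions in the run of a's have such
destinations, the average scan length over all positions is Ω(r). -/
theorem stmt9 {α : Type*} [LinearOrder α] (a b c : α) (hab : a < b) (hbc : b < c)
    (n : ℕ) (hdvd : 10 ∣ n) (hn : 0 < n) (B : Fin n → α)
    (hB1 : ∀ j : ℕ, ∀ hj : j < n / 10,
      B ⟨2 * j, by omega⟩ = b ∧ B ⟨2 * j + 1, by omega⟩ = c)
    (hB2 : ∀ i : Fin n, n / 5 ≤ i.val → B i = a) :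
    (runHeads B).card = n / 5 + 1 ∧
    (∀ t : ℕ, ∀ ht : n / 5 + t < n, LF B ⟨n / 5 + t, ht⟩ = t) ∧
    (∀ t : ℕ, t < n →
      ((runHeads B).filter (fun x => x.val ≤ t)).card = min t (n / 5) + 1) ∧
    n / 5 * 3 ≤ (Finset.univ.filter (fun i : Fin n =>
      n / 5 ≤ i.val ∧ n / 5 ≤ LF B i)).card := by

  obtain ⟨m, rfl⟩ := hdvd
  have hm : 0 < m := by omega
  have hne : a ≠ b := ne_of_lt hab
  have hbc' : b ≠ c := ne_of_lt hbc
  have hac : a ≠ c := ne_of_lt (hab.trans hbc)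
  -- characterization of B on the bc-prefix
  have hBlt : ∀ i : Fin (10*m), i.val < 2*m → B i = if i.val % 2 = 0 then b else c := by
    intro i hi
    rcases Nat.even_or_odd i.val with ⟨j, hj⟩ | ⟨j, hj⟩
    · have hjm : j < 10*m/10 := by omega
      have hmod : i.val % 2 = 0 := by omega
      rw [if_pos hmod]
      have hi2 : i = ⟨2*j, by omega⟩ := Fin.ext (by simp; omega)
      rw [hi2]
      exact (hB1 j hjm).1
    · have hjm : j < 10*m/10 := by omega
      have hmod : ¬ (i.val % 2 = 0) := by omega
      rw [if_neg hmod]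
      have hi2 : i = ⟨2*j+1, by omega⟩ := Fin.ext (by simp; omega)
      rw [hi2]
      exact (hB1 j hjm).2
  have hBa : ∀ i : Fin (10*m), 2*m ≤ i.val → B i = a := by
    intro i h
    exact hB2 i (by omega)
  have hBnea : ∀ i : Fin (10*m), i.val < 2*m → B i ≠ a := by
    intro i h
    rw [hBlt i h]
    split_ifs
    · exact hne.symm
    · exact hac.symm
  -- run heads are exactly positions ≤ 2m
  have hRH : runHeads B = Finset.univ.filter (fun i : Fin (10*m) => i.val ≤ 2*m) := by
    ext i
    simp only [runHeads, Finset.mem_filter, Finset.mem_univ, true_and]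
    have hpv : (finPred i).val = i.val - 1 := rfl
    constructor
    · rintro (h0 | hne')
      · omega
      · by_contra hgt
        push_neg at hgt
        exact hne' (by rw [hBa i (by omega), hBa (finPred i) (by omega)])
    · intro hle
      rcases Nat.eq_zero_or_pos i.val with h0 | hpos
      · exact Or.inl h0
      · right
        by_cases h2 : i.val = 2*m
        · rw [hBa i (by omega), hBlt (finPred i) (by omega)]
          split_ifs
          · exact hne
          · exact hac
        · rw [hBlt i (by omega), hBlt (finPred i) (by omega)]
          split_ifs with h1 h2'
          · exfalso; omega
          · exact hbc'
          · exact hbc'.symm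
          · exfalso; omega
  have hcard : ∀ t : ℕ, t < 10*m →
      (Finset.univ.filter (fun i : Fin (10*m) => i.val ≤ t)).card = t + 1 := by
    intro t ht
    have heq : Finset.univ.filter (fun i : Fin (10*m) => i.val ≤ t)
        = Finset.Iic (⟨t, ht⟩ : Fin (10*m)) := by
      ext i
      simp [Finset.mem_Iic, Fin.le_def]
    rw [heq, Fin.card_Iic]
  -- LF computation
  have hLF : ∀ t : ℕ, ∀ ht : 10*m/5 + t < 10*m, LF B ⟨10*m/5 + t, ht⟩ = t := by
    intro t ht
    have hval : (⟨10*m/5 + t, ht⟩ : Fin (10*m)).val = 2*m + t := by simp; omega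
    have hBi : B ⟨10*m/5 + t, ht⟩ = a := hBa _ (by omega)
    unfold LF
    rw [hBi]
    have hC : Ccount B a = 0 := by
      unfold Ccount
      rw [Finset.card_eq_zero, Finset.filter_eq_empty_iff]
      intro j _
      rcases lt_or_ge j.val (2*m) with h | h
      · rw [hBlt j h]
        split_ifs
        · exact not_lt.2 hab.le
        · exact not_lt.2 (hab.trans hbc).le
      · rw [hBa j h]
        exact lt_irrefl a
    have hr : rank B a ⟨10*m/5 + t, ht⟩ = t := by
      unfold rank
      have heq : Finset.univ.filter (fun j : Fin (10*m) => j < ⟨10*m/5 + t, ht⟩ ∧ B j = a)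
          = Finset.Ico (⟨2*m, by omega⟩ : Fin (10*m)) ⟨2*m + t, by omega⟩ := by
        ext j
        simp only [Finset.mem_filter, Finset.mem_univ, true_and, Finset.mem_Ico,
          Fin.lt_def, Fin.le_def]
        constructor
        · rintro ⟨hji, hja⟩
          constructor
          · by_contra hlt
            push_neg at hlt
            exact hBnea j (by omega) hja
          · omega
        · rintro ⟨h1, h2⟩
          exact ⟨by omega, hBa j h1⟩
      rw [heq, Fin.card_Ico]
      simp
    rw [hC, hr]
    omega
  refine ⟨?_, hLF, ?_, ?_⟩
  · rw [hRH, hcard (2*m) (by omega)]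
    omega
  · intro t ht
    have heq : (runHeads B).filter (fun x => x.val ≤ t)
        = Finset.univ.filter (fun i : Fin (10*m) => i.val ≤ min t (2*m)) := by
      rw [hRH, Finset.filter_filter]
      ext i
      simp only [Finset.mem_filter, Finset.mem_univ, true_and]
      omega
    rw [heq, hcard (min t (2*m)) (by omega)]
    omega
  · have hsub : Finset.univ.filter (fun i : Fin (10*m) => 4*m ≤ i.val)
        ⊆ Finset.univ.filter (fun i : Fin (10*m) => 10*m/5 ≤ i.val ∧ 10*m/5 ≤ LF B i) := by
      intro i hi
      simp only [Finset.mem_filter, Finset.mem_univ, true_and] at hi ⊢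
      refine ⟨by omega, ?_⟩
      have hi' : i = ⟨10*m/5 + (i.val - 10*m/5), by omega⟩ := Fin.ext (by simp; omega)
      rw [hi', hLF (i.val - 10*m/5)]
      omega
    have heq : Finset.univ.filter (fun i : Fin (10*m) => 4*m ≤ i.val)
        = Finset.Ici (⟨4*m, by omega⟩ : Fin (10*m)) := by
      ext i
      simp [Finset.mem_Ici, Fin.le_def]
    have hle := Finset.card_le_card hsub
    rw [heq, Fin.card_Ici] at hle
    simp at hle
    omega
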